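/- For every real number p with (1 + √(12/π − 3))/2 < p < 1, there exists T₀ = T₀(p) > 1 such that for all positive reals a, b with a/b ∈ (T₀, ∞) the inequality C̄(p·a + (1−p)·b, p·b + (1−p)·a) > T(a,b) holds. -/

import Mathlib

open Real

/-- The Seiffert mean of two positive reals. -/
noncomputable def seiffertT (a b : ℝ) : ℝ := (a - b) / (2 * Real.arctan ((a - b) / (a + b)))

/-- The centroidal mean of two positive reals. -/
noncomputable def centroidalMean (a b : ℝ) : ℝ := 2 * (a ^ 2 + a * b + b ^ 2) / (3 * (a + b))

lemma arctan_strictConcave : StrictConcaveOn ℝ (Set.Ici (0:ℝ)) Real.arctan := by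
  apply strictConcaveOn_of_deriv2_neg (convex_Ici 0)
    (Real.continuous_arctan.continuousOn)
  intro x hx
  rw [interior_Ici] at hx
  have h1 : deriv^[2] Real.arctan x = deriv (fun y : ℝ => 1 / (1 + y ^ 2)) x := by
    simp [Function.iterate_succ, Real.deriv_arctan]
  rw [h1]
  have hne : (1 + x ^ 2) ≠ 0 := by positivity
  have hd0 : HasDerivAt (fun y : ℝ => 1 + y ^ 2) (2 * x) x := by
    simpa using ((hasDerivAt_pow 2 x).const_add 1)
  have hd : HasDerivAt (fun y : ℝ => 1 / (1 + y ^ 2)) (-(2 * x) / (1 + x ^ 2) ^ 2) x := by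
    simpa [one_div, Pi.inv_def] using hd0.inv hne
  rw [hd.deriv]
  have hx0 : (0:ℝ) < x := hx
  have h2 : 0 < (1 + x ^ 2) ^ 2 := by positivity
  apply div_neg_of_neg_of_pos (by linarith) h2

lemma arctan_gt {t : ℝ} (h0 : 0 < t) (h1 : t < 1) : π / 4 * t < Real.arctan t := by
  have key := arctan_strictConcave.2 (Set.self_mem_Ici (a := (0:ℝ)))
    (show (1:ℝ) ∈ Set.Ici (0:ℝ) by norm_num) (by norm_num)
    (show (0:ℝ) < 1 - t by linarith) h0 (by ring)
  simp only [smul_eq_mul, mul_zero, mul_one, zero_add, Real.arctan_zero,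
    Real.arctan_one] at key
  linarith

theorem stmt_18 (p : ℝ) (hp₁ : (1 + Real.sqrt (12 / π - 3)) / 2 < p) (hp₂ : p < 1) :
    ∃ T₀ : ℝ, 1 < T₀ ∧
      ∀ a b : ℝ, 0 < a → 0 < b → a / b ∈ Set.Ioi T₀ →
        centroidalMean (p * a + (1 - p) * b) (p * b + (1 - p) * a) > seiffertT a b := by
  have hπ : (0:ℝ) < π := Real.pi_pos
  have hπ4 : π < 4 := by linarith [Real.pi_lt_d2]
  have hs := Real.sqrt_nonneg (12 / π - 3)
  have hp' : 0 < 2 * p - 1 := by linarith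
  have hsqrt : Real.sqrt (12 / π - 3) < 2 * p - 1 := by linarith
  have hDlt : 12 / π - 3 < (2 * p - 1) ^ 2 := (Real.sqrt_lt' hp').mp hsqrt
  have h12 : 12 / π = 4 * (3 / π) := by ring
  have hc : 0 < 1 - 3 / π - p * (1 - p) := by nlinarith
  set c : ℝ := 1 - 3 / π - p * (1 - p) with hcdef
  set M : ℝ := max 2 ((2 * p - 1) ^ 2 / c) with hMdef
  have hM2 : (2:ℝ) ≤ M := le_max_left _ _
  refine ⟨M, by linarith, ?_⟩
  intro a b ha hb hmem
  have hub : M < a / b := hmem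
  have hMb : M * b < a := (lt_div_iff₀ hb).mp hub
  have hba : b < a := by nlinarith
  have hT : (2 * p - 1) ^ 2 / c ≤ M := le_max_right _ _
  have h1 : (2 * p - 1) ^ 2 ≤ M * c := (div_le_iff₀ hc).mp hT
  have hMab : M * (a * b) < (a + b) ^ 2 := by nlinarith
  have hkey : (2 * p - 1) ^ 2 * (a * b) < c * (a + b) ^ 2 := by
    nlinarith [mul_pos ha hb, mul_le_mul_of_nonneg_right h1 (le_of_lt (mul_pos ha hb)),
      mul_lt_mul_of_pos_left hMab hc]
  have habpos : (0:ℝ) < a + b := by linarith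
  -- bound the Seiffert mean
  have ht0 : 0 < (a - b) / (a + b) := div_pos (by linarith) habpos
  have ht1 : (a - b) / (a + b) < 1 := (div_lt_one habpos).mpr (by linarith)
  have harc := arctan_gt ht0 ht1
  have harcpos : 0 < Real.arctan ((a - b) / (a + b)) := by
    have : 0 < π / 4 * ((a - b) / (a + b)) := by positivity
    linarith
  have hs1 : seiffertT a b < 2 * (a + b) / π := by
    rw [seiffertT, div_lt_iff₀ (by positivity)]
    have hmul := mul_lt_mul_of_pos_left harc (show (0:ℝ) < 4 * (a + b) / π by positivity)
    have hid : 4 * (a + b) / π * (π / 4 * ((a - b) / (a + b))) = a - b := by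
      field_simp
    have hring : 2 * (a + b) / π * (2 * Real.arctan ((a - b) / (a + b)))
        = 4 * (a + b) / π * Real.arctan ((a - b) / (a + b)) := by ring
    linarith [hmul, hid, hring]
  have hs2 : 2 * (a + b) / π <
      centroidalMean (p * a + (1 - p) * b) (p * b + (1 - p) * a) := by
    rw [centroidalMean,
      show p * a + (1 - p) * b + (p * b + (1 - p) * a) = a + b from by ring,
      div_lt_div_iff₀ hπ (by linarith)]
    have hbig := mul_lt_mul_of_pos_left hkey (show (0:ℝ) < 2 * π by linarith)
    have h3π : π * (3 / π) * (a + b) ^ 2 = 3 * (a + b) ^ 2 := by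
      rw [mul_div_cancel₀ 3 hπ.ne']
    rw [hcdef] at hbig
    linarith [hbig, h3π]
  linarith
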